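/- Let n ≥ 2, a_0, …, a_n real, a ∈ (−1,1), 0 < r ≤ 1/2, and suppose n > √(1−a²)/(2r). Let u_k(a) be the Clenshaw sequence of p at a, and let M > 0 satisfy |u_k(a)| ≤ M for 1 ≤ k ≤ n. Define e_n = 0, f_n = 0; for k = n−1 down to 1: f_k = 2r·|u_{k+1}(a)| + 2r·e_{k+1} + f_{k+1} and e_k = min(e_{k+1} + f_k, f_k/√(1−a²)); finally f_0 = r·|u_1(a)| + 2r·e_1 + f_1 and e_0 = min(e_1 + f_0, f_0/√(1−a²)). Then e_0 ≤ 2M·[(1 + 2r/√(1−a²))^n − 1]. -/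
import Mathlib


open Finset

/-- Radius bound for the ball Clenshaw algorithm (forward error, exact arithmetic),
case `n > √(1-a²)/(2r)`: the final radius satisfies `e₀ ≤ 2M[(1+2r/√(1-a²))ⁿ − 1]`. -/
theorem ball_clenshaw_forward_radius_large_n (n : ℕ) (hn : 2 ≤ n) (a : ℕ → ℝ)
    (c : ℝ) (hc : c ∈ Set.Ioo (-1 : ℝ) 1) (r : ℝ) (hr : 0 < r)
    (hr2 : r ≤ 1 / 2)
    (hncase : Real.sqrt (1 - c ^ 2) / (2 * r) < (n : ℝ))
    (u : ℕ → ℝ) (hun1 : u (n + 1) = 0) (hun : u n = a n)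
    (hurec : ∀ k, 1 ≤ k → k ≤ n - 1 → u k = 2 * c * u (k + 1) - u (k + 2) + a k)
    (M : ℝ) (hM : 0 < M) (hMu : ∀ k, 1 ≤ k → k ≤ n → |u k| ≤ M)
    (e f : ℕ → ℝ) (hen : e n = 0) (hfn : f n = 0)
    (href : ∀ k, 1 ≤ k → k ≤ n - 1 →
      f k = 2 * r * |u (k + 1)| + 2 * r * e (k + 1) + f (k + 1) ∧
      e k = min (e (k + 1) + f k) (f k / Real.sqrt (1 - c ^ 2)))
    (hf0 : f 0 = r * |u 1| + 2 * r * e 1 + f 1)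
    (he0 : e 0 = min (e 1 + f 0) (f 0 / Real.sqrt (1 - c ^ 2))) :
    e 0 ≤ 2 * M * ((1 + 2 * r / Real.sqrt (1 - c ^ 2)) ^ n - 1) := by
  set s := Real.sqrt (1 - c ^ 2) with hs_def
  have hc2 : c ^ 2 < 1 := by
    obtain ⟨h1, h2⟩ := hc
    nlinarith
  have hs : 0 < s := Real.sqrt_pos.mpr (by nlinarith)
  set q := 1 + 2 * r / s with hq_def
  have hq1 : 1 < q := by
    rw [hq_def]
    have : 0 < 2 * r / s := by positivity
    linarith
  have hsq : s * q = s + 2 * r := by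
    rw [hq_def]
    field_simp
  have key : ∀ j, j ≤ n - 1 →
      f (n - j) ≤ M * s * (q ^ j - 1) ∧ e (n - j) ≤ M * (q ^ j - 1) := by
    intro j
    induction j with
    | zero => intro _; simp [hen, hfn]
    | succ j ih =>
      intro hj
      obtain ⟨ihf, ihe⟩ := ih (Nat.le_of_succ_le hj)
      set k := n - (j + 1) with hk
      have hk1 : 1 ≤ k := by omega
      have hk2 : k ≤ n - 1 := by omega
      have hkk : k + 1 = n - j := by omega
      obtain ⟨hfk, hek⟩ := href k hk1 hk2
      rw [hkk] at hfk hek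
      have hu : |u (n - j)| ≤ M := hMu _ (by omega) (by omega)
      have hQ1 : (1 : ℝ) ≤ q ^ j := one_le_pow₀ (le_of_lt hq1)
      have heq : M * s * (q ^ (j + 1) - 1)
          = 2 * r * M + 2 * r * (M * (q ^ j - 1)) + M * s * (q ^ j - 1) := by
        rw [pow_succ]
        linear_combination M * q ^ j * hsq
      have hf' : f k ≤ M * s * (q ^ (j + 1) - 1) := by
        rw [hfk, heq]
        have h1 : 2 * r * |u (n - j)| ≤ 2 * r * M := by nlinarith
        have h2 : 2 * r * e (n - j) ≤ 2 * r * (M * (q ^ j - 1)) := by nlinarith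
        linarith
      refine ⟨hf', ?_⟩
      rw [hek]
      refine le_trans (min_le_right _ _) ?_
      rw [div_le_iff₀ hs]
      exact hf'.trans (le_of_eq (by ring))
  obtain ⟨hf1, he1⟩ := key (n - 1) le_rfl
  have h1 : n - (n - 1) = 1 := by omega
  rw [h1] at hf1 he1
  have hu1 : |u 1| ≤ M := hMu 1 le_rfl (by omega)
  have hpow : q ^ n = q ^ (n - 1) * q := by
    rw [← pow_succ]
    congr 1
    omega
  have hQ1 : (1 : ℝ) ≤ q ^ (n - 1) := one_le_pow₀ (le_of_lt hq1)
  have he0' : e 0 ≤ f 0 / s := he0 ▸ min_le_right _ _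
  refine le_trans he0' ?_
  rw [div_le_iff₀ hs, hf0]
  have hRHS : 2 * M * (q ^ n - 1) * s = 2 * M * s * q ^ (n - 1) + 4 * M * r * q ^ (n - 1) - 2 * M * s := by
    rw [hpow]
    linear_combination 2 * M * q ^ (n - 1) * hsq
  have h1 : r * |u 1| ≤ r * M := mul_le_mul_of_nonneg_left hu1 (le_of_lt hr)
  have h2 : 2 * r * e 1 ≤ 2 * r * (M * (q ^ (n - 1) - 1)) :=
    mul_le_mul_of_nonneg_left he1 (by positivity)
  have h4 := mul_le_mul_of_nonneg_left hQ1 (le_of_lt (mul_pos hM hs))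
  rw [mul_one] at h4
  have h5 := mul_le_mul_of_nonneg_left hQ1 (le_of_lt (mul_pos hM hr))
  rw [mul_one] at h5
  have hMr : 0 < M * r := mul_pos hM hr
  linarith
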